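/- Let A be a nontrivial unital C*-algebra over ℂ and let u ∈ A be a unitary element. Suppose that for every real number θ there exists a unitary element v ∈ A such that v * u * v⁻¹ = exp(iθ) • u. Then ‖u - 1‖ = 2. -/

import Mathlib

/-- If `u` is a unitary element of a nontrivial unital C*-algebra whose conjugacy class
contains all its scalar rotations `exp(iθ) • u`, then `‖u - 1‖ = 2`. -/
theorem weyl_norm_dist_one
    (A : Type*) [NormedRing A] [StarRing A] [CStarRing A] [NormedAlgebra ℂ A]
    [CompleteSpace A] [Nontrivial A]
    (u : A) (hu : u ∈ unitary A)
    (h : ∀ θ : ℝ, ∃ v : unitary A,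
      (v : A) * u * ((v⁻¹ : unitary A) : A) = Complex.exp (θ * Complex.I) • u) :
    ‖u - 1‖ = 2 := by
  -- Step 1: all rotations of u have the same distance to 1
  have hc : ∀ θ : ℝ, ‖Complex.exp (θ * Complex.I) • u - 1‖ = ‖u - 1‖ := by
    intro θ
    obtain ⟨v, hv⟩ := h θ
    have hvv : (v : A) * ((v⁻¹ : unitary A) : A) = 1 := by
      rw [← Submonoid.coe_mul, mul_inv_cancel]; rfl
    have key : Complex.exp (θ * Complex.I) • u - 1
        = (v : A) * (u - 1) * ((v⁻¹ : unitary A) : A) := by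
      rw [mul_sub, sub_mul, mul_one, hvv, hv]
    rw [key, CStarRing.norm_mul_coe_unitary, CStarRing.norm_coe_unitary_mul]
  -- Step 2: pick a spectral value of u; it lies on the unit circle
  obtain ⟨lam, hlam⟩ := spectrum.nonempty u
  have habs : ‖lam‖ = 1 := by
    have := spectrum.subset_circle_of_unitary hu hlam
    simpa [Metric.mem_sphere, Complex.dist_eq] using this
  -- Step 3: rotate lam to -1
  obtain ⟨a, ha⟩ := (Complex.norm_eq_one_iff lam).mp habs
  set θ : ℝ := Real.pi - a with hθ
  have hrot : Complex.exp (θ * Complex.I) * lam = -1 := by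
    rw [← ha, ← Complex.exp_add, hθ]
    have : ((Real.pi - a : ℝ) : ℂ) * Complex.I + a * Complex.I
        = (Real.pi : ℂ) * Complex.I := by push_cast; ring
    rw [this, Complex.exp_pi_mul_I]
  -- Step 4: -1 is in the spectrum of the rotated unitary
  have hunit : Complex.exp (θ * Complex.I) ≠ 0 := Complex.exp_ne_zero _
  have hmem : (-1 : ℂ) ∈ spectrum ℂ (Complex.exp (θ * Complex.I) • u) := by
    rw [show Complex.exp (θ * Complex.I) • u
        = (Units.mk0 _ hunit : ℂˣ) • u from rfl,
      spectrum.unit_smul_eq_smul]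
    exact Set.mem_smul_set.mpr ⟨lam, hlam, by simpa [Units.smul_def] using hrot⟩
  -- Step 5: -2 is in the spectrum of (rotated u) - 1
  have hmem2 : (-2 : ℂ) ∈ spectrum ℂ (Complex.exp (θ * Complex.I) • u - 1) := by
    have := spectrum.sub_singleton_eq (Complex.exp (θ * Complex.I) • u) (1 : ℂ)
    rw [map_one] at this
    rw [← this]
    exact Set.mem_sub.mpr ⟨-1, hmem, 1, Set.mem_singleton _, by ring⟩
  -- Step 6: conclude
  have hge : (2 : ℝ) ≤ ‖u - 1‖ := by
    have := spectrum.norm_le_norm_of_mem hmem2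
    rw [hc θ] at this
    simpa using this
  have hle : ‖u - 1‖ ≤ 2 := by
    calc ‖u - 1‖ ≤ ‖u‖ + ‖(1 : A)‖ := norm_sub_le _ _
    _ = 2 := by rw [CStarRing.norm_of_mem_unitary hu, norm_one]; norm_num
  linarith
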